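/- Let $(a_m)_{m \ge 1}$ be a sequence of nonnegative reals and suppose that for some constant $\mathfrak{c} \ge 1$ and all $m \ge 1$, $h \ge 1$: $\sum_{m' \ge hm} e^{-2 a_{m'}} \le 2 e^{-2 h a_m / \mathfrak{c}^2}$. Define weights $\lambda_m = e^{-2a_m} / \Sigma$ where $\Sigma = \sum_{k \ge 1} e^{-2a_k}$ (assumed finite and positive). Then for every $m$: (i) $\lambda_m \ge \frac{1}{2} e^{-2 a_m}$, and (ii) for every integer $\mathfrak{h} \ge 2\mathfrak{c}^2$, $\sum_{k > \mathfrak{h} m} \lambda_k \le 2 e^{-a_m}$. -/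
import Mathlib


/-- The generic model selection prior `λ_m ∝ exp(-2 a_m)` satisfies the mass
condition (P1). -/
theorem generic_prior_mass (a : ℕ → ℝ) (c : ℝ) (hc : 1 ≤ c)
    (ha : ∀ m, 0 ≤ a m) (hmono : Monotone a)
    (hsum : ∀ m : ℕ, 1 ≤ m → ∀ h : ℕ, 1 ≤ h →
      (∑' k : ℕ, Real.exp (-2 * a (h * m + k)))
        ≤ 2 * Real.exp (-2 * (h : ℝ) * a m / c^2))
    (hS : Summable fun k : ℕ => Real.exp (-2 * a (1 + k))) :
    ∀ m : ℕ, 1 ≤ m →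
      ((1:ℝ)/2) * Real.exp (-2 * a m)
          ≤ Real.exp (-2 * a m) / (∑' k : ℕ, Real.exp (-2 * a (1 + k))) ∧
      ∀ H : ℕ, 2 * c^2 ≤ (H : ℝ) →
        (∑' k : ℕ, Real.exp (-2 * a (H * m + 1 + k))
            / (∑' k : ℕ, Real.exp (-2 * a (1 + k))))
          ≤ 2 * Real.exp (-(a m)) := by
  intro m hm
  have hc2 : (0:ℝ) < c ^ 2 := by positivity
  set f : ℕ → ℝ := fun j => Real.exp (-2 * a j) with hf
  have hfpos : ∀ j, 0 < f j := fun j => Real.exp_pos _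
  have hSf : Summable fun k => f (k + 1) := by
    simpa [hf, add_comm] using hS
  have hsumf : Summable f := (summable_nat_add_iff 1).mp hSf
  have htail : ∀ n : ℕ, Summable fun k => f (n + k) := by
    intro n
    have := (summable_nat_add_iff (f := f) n).mpr hsumf
    simpa [add_comm] using this
  have hSdef : (∑' k : ℕ, Real.exp (-2 * a (1 + k))) = ∑' k, f (1 + k) := rfl
  have hf1S : f 1 ≤ ∑' k, f (1 + k) := by
    have := Summable.le_tsum (htail 1) 0 (fun j _ => (hfpos _).le)
    simpa using this
  have hSpos : 0 < ∑' k, f (1 + k) := lt_of_lt_of_le (hfpos 1) hf1S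
  have hS2 : (∑' k, f (1 + k)) ≤ 2 := by
    have h1 := hsum 1 le_rfl 1 le_rfl
    have h2 : Real.exp (-2 * (1:ℝ) * a 1 / c ^ 2) ≤ 1 := by
      rw [Real.exp_le_one_iff]
      have := ha 1
      apply div_nonpos_of_nonpos_of_nonneg <;> nlinarith
    calc (∑' k, f (1 + k)) ≤ 2 * Real.exp (-2 * (1:ℝ) * a 1 / c ^ 2) := by
          simpa [hf] using h1
      _ ≤ 2 * 1 := by nlinarith
      _ = 2 := by ring
  constructor
  · rw [hSdef]
    have : f m / 2 ≤ f m / (∑' k, f (1 + k)) := by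
      gcongr
    calc ((1:ℝ)/2) * Real.exp (-2 * a m) = f m / 2 := by rw [hf]; ring
      _ ≤ _ := this
  · intro H hH
    have hH1 : 1 ≤ H := by
      have h2H : (1:ℝ) ≤ (H:ℝ) := by nlinarith
      exact Nat.one_le_cast.mp h2H
    rw [tsum_div_const, hSdef]
    have hT1 : (∑' k, f (H * m + 1 + k)) ≤ ∑' k, f (H * m + k) := by
      apply Summable.tsum_le_tsum _ (htail (H * m + 1)) (htail (H * m))
      intro k
      apply Real.exp_le_exp.mpr
      have : a (H * m + k) ≤ a (H * m + 1 + k) := hmono (by omega)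
      linarith
    have hT2 : (∑' k, f (H * m + k)) ≤ 2 * Real.exp (-2 * (H:ℝ) * a m / c ^ 2) :=
      hsum m hm H hH1
    have key : (∑' k, f (H * m + 1 + k)) / (∑' k, f (1 + k))
        ≤ (2 * Real.exp (-2 * (H:ℝ) * a m / c ^ 2)) / f 1 := by
      apply div_le_div₀ (by positivity) (le_trans hT1 hT2) (hfpos 1) hf1S
    refine le_trans key ?_
    rw [hf]
    rw [div_eq_mul_inv, ← Real.exp_neg, mul_assoc, ← Real.exp_add]
    have hexp : -2 * (H:ℝ) * a m / c ^ 2 + -(-2 * a 1) ≤ -(a m) := by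
      have h4 : 4 * a m ≤ 2 * (H:ℝ) * a m / c ^ 2 := by
        rw [le_div_iff₀ hc2]
        nlinarith [ha m, mul_le_mul_of_nonneg_left hH (ha m)]
      have ham := ha m
      have h1m : a 1 ≤ a m := hmono hm
      have : -2 * (H:ℝ) * a m / c ^ 2 = -(2 * (H:ℝ) * a m / c ^ 2) := by ring
      rw [this]
      linarith
    have := Real.exp_le_exp.mpr hexp
    nlinarith [Real.exp_pos (-(a m))]
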